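/- Let p ≥ 2 be an integer and r ∈ {1,…,p−1}. Then for every j ∈ {0,…,p−1} and every n ∈ ℕ with n ≥ 1, one has D_{p,r}(pn + j) = (−1)^j · C(r,j) · D_{p,r}(n), with the convention C(r,j) = 0 for j > r. -/

import Mathlib

open PowerSeries Finset
open scoped Polynomial

/-- The number of digits equal to `i` in the base-`p` representation of `n`. -/
def Np (p i n : ℕ) : ℕ := (Nat.digits p n).count i

/-- `Dcoef p r n` is the coefficient of `x^n` in `∏_{i=0}^∞ (1 - x^{p^i})^r`.
Since `p ≥ 2`, the factors with index `i > n` do not affect the coefficient of `x^n`,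
so the product may be truncated at `i = n`. -/
noncomputable def Dcoef (p r n : ℕ) : ℤ :=
  PowerSeries.coeff (R := ℤ) n (∏ i ∈ Finset.range (n + 1), (1 - PowerSeries.X ^ p ^ i) ^ r)

/-- `Dp p n = D_{p,p-1}(n)`. -/
noncomputable def Dp (p n : ℕ) : ℤ := Dcoef p (p - 1) n

/-- `Acoef m k n` is the coefficient of `x^n` in `∏_{i=0}^∞ (1 - x^{m^i})^{-k}`,
the number of `k`-colored `m`-ary partitions of `n`.  Here `(1 - X^{m^i})⁻¹` is
realized as `PowerSeries.invOfUnit (1 - X ^ m ^ i) 1`, and since `m ≥ 2` the factors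
with index `i > n` do not affect the coefficient of `x^n`. -/
noncomputable def Acoef (m k n : ℕ) : ℤ :=
  PowerSeries.coeff (R := ℤ) n
    (∏ i ∈ Finset.range (n + 1),
      (PowerSeries.invOfUnit (1 - PowerSeries.X ^ m ^ i) 1) ^ k)


noncomputable def Qpoly (p r N : ℕ) : Polynomial ℤ :=
  ∏ i ∈ Finset.range (N + 1), (1 - Polynomial.X ^ p ^ i) ^ r

lemma Dcoef_eq (p r n : ℕ) : Dcoef p r n = (Qpoly p r n).coeff n := by
  rw [Dcoef, Qpoly, ← Polynomial.coeff_coe]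
  congr 1
  rw [← Polynomial.coeToPowerSeries.ringHom_apply, map_prod]
  apply Finset.prod_congr rfl
  intro i _
  simp [Polynomial.coeToPowerSeries.ringHom_apply, Polynomial.coe_sub, Polynomial.coe_pow,
    Polynomial.coe_X, Polynomial.coe_one]

lemma coeff_one_sub_X_pow (r j : ℕ) :
    ((1 - Polynomial.X : Polynomial ℤ) ^ r).coeff j = (-1 : ℤ) ^ j * r.choose j := by
  have h : (1 - Polynomial.X : Polynomial ℤ) ^ r
      = ∑ k ∈ range (r + 1), Polynomial.C ((-1 : ℤ) ^ k * (r.choose k : ℤ)) * Polynomial.X ^ k := by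
    rw [sub_eq_add_neg, add_comm, add_pow]
    apply Finset.sum_congr rfl
    intro k hk
    rw [neg_pow]
    simp only [map_mul, map_pow, map_neg, map_one, Polynomial.C_eq_natCast]
    ring
  rw [h, Polynomial.finset_sum_coeff]
  simp only [Polynomial.coeff_C_mul, Polynomial.coeff_X_pow]
  by_cases hjr : j ≤ r
  · rw [Finset.sum_eq_single j]
    · simp
    · intro b hb hbj
      simp [Ne.symm hbj]
    · intro h'
      exact absurd (Finset.mem_range.mpr (by omega)) h'
  · rw [Nat.choose_eq_zero_of_lt (by omega)]
    push_cast
    rw [mul_zero]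
    apply Finset.sum_eq_zero
    intro k hk
    simp only [Finset.mem_range] at hk
    simp [show j ≠ k by omega]

lemma Qpoly_coeff_stable (p r : ℕ) (hp : 2 ≤ p) {n N : ℕ} (hN : n ≤ N) :
    (Qpoly p r N).coeff n = (Qpoly p r n).coeff n := by
  induction N with
  | zero => obtain rfl : n = 0 := by omega
            rfl
  | succ N ih =>
    rcases Nat.lt_or_ge n (N + 1) with h | h
    · rw [← ih (by omega)]
      have hsplit : Qpoly p r (N + 1) = Qpoly p r N * (1 - Polynomial.X ^ p ^ (N + 1)) ^ r := by
        rw [Qpoly, Qpoly, Finset.prod_range_succ]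
      have hdvd : (Polynomial.X : ℤ[X]) ^ p ^ (N + 1) ∣ (1 - Polynomial.X ^ p ^ (N + 1)) ^ r - 1 := by
        have h1 := sub_dvd_pow_sub_pow (1 - Polynomial.X ^ p ^ (N + 1) : ℤ[X]) 1 r
        simp only [one_pow] at h1
        have h2 : (1 - Polynomial.X ^ p ^ (N + 1) - 1 : ℤ[X]) = -(Polynomial.X ^ p ^ (N + 1)) := by ring
        rw [h2, neg_dvd] at h1
        exact h1
      obtain ⟨c, hc⟩ := hdvd
      have hexp : Qpoly p r (N + 1) = Qpoly p r N + Qpoly p r N * (Polynomial.X ^ p ^ (N + 1) * c) := by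
        rw [hsplit, ← hc]; ring
      have hpow : N + 1 < p ^ (N + 1) := Nat.lt_pow_self (by omega)
      rw [hexp, Polynomial.coeff_add]
      have hz : (Qpoly p r N * (Polynomial.X ^ p ^ (N + 1) * c)).coeff n = 0 := by
        rw [show Qpoly p r N * (Polynomial.X ^ p ^ (N + 1) * c) = Polynomial.X ^ p ^ (N + 1) * (Qpoly p r N * c) by
          ring]
        rw [Polynomial.coeff_X_pow_mul']
        simp [Nat.not_le.mpr (show n < p ^ (N + 1) by omega)]
      rw [hz, add_zero]
    · obtain rfl : n = N + 1 := by omega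
      rfl

lemma Qpoly_succ (p r N : ℕ) :
    Qpoly p r (N + 1) = (1 - Polynomial.X) ^ r * Polynomial.expand ℤ p (Qpoly p r N) := by
  rw [Qpoly, Qpoly, map_prod, Finset.prod_range_succ']
  simp only [map_pow, map_sub, map_one, Polynomial.expand_X, pow_zero, pow_one]
  rw [mul_comm]
  congr 1
  apply Finset.prod_congr rfl
  intro i _
  rw [← pow_mul, ← pow_succ']

theorem stmt1 (p r : ℕ) (hp : 2 ≤ p) (hr1 : 1 ≤ r) (hr2 : r ≤ p - 1)
    (j n : ℕ) (hj : j ≤ p - 1) (hn : 1 ≤ n) :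
    Dcoef p r (p * n + j) = (-1 : ℤ) ^ j * (r.choose j : ℤ) * Dcoef p r n := by
  have hp0 : 0 < p := by omega
  have hpn : 2 ≤ p * n := le_trans (by omega) (Nat.mul_le_mul (le_refl p) hn)
  have h2n : 2 * n ≤ p * n := Nat.mul_le_mul_right n hp
  set m := p * n + j with hm
  have hm2 : 2 ≤ m := by omega
  obtain ⟨M, hM⟩ : ∃ M, m = M + 1 := ⟨m - 1, by omega⟩
  have hnM : n ≤ M := by omega
  rw [Dcoef_eq, Dcoef_eq, hM, Qpoly_succ, Polynomial.coeff_mul]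
  rw [Finset.sum_eq_single ((j, p * n) : ℕ × ℕ)]
  · rw [Polynomial.coeff_expand_mul' hp0, coeff_one_sub_X_pow,
      Qpoly_coeff_stable p r hp hnM]
  · rintro ⟨a, b⟩ hab hne
    rw [Finset.HasAntidiagonal.mem_antidiagonal] at hab
    simp only at hab
    by_cases hdvd : p ∣ b
    · obtain ⟨t, rfl⟩ := hdvd
      have ha : r < a := by
        rcases le_or_gt t n with ht | ht
        · have hmul : p * (n - t) = p * n - p * t := Nat.mul_sub p n t
          have hle : p * t ≤ p * n := Nat.mul_le_mul_left p ht
          have ha' : a = p * (n - t) + j := by omega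
          rcases Nat.eq_zero_or_pos (n - t) with h0 | h0
          · exfalso
            have : t = n := by omega
            subst this
            exact hne (by simp [ha', h0])
          · have : p * 1 ≤ p * (n - t) := Nat.mul_le_mul_left p h0
            omega
        · exfalso
          have h3 : p * (n + 1) ≤ p * t := Nat.mul_le_mul_left p (by omega)
          have h4 : p * (n + 1) = p * n + p := by ring
          omega
      rw [coeff_one_sub_X_pow, Nat.choose_eq_zero_of_lt ha]
      simp
    · rw [Polynomial.coeff_expand hp0]
      simp [hdvd]
  · intro h
    exact absurd (Finset.HasAntidiagonal.mem_antidiagonal.mpr (by simp [← hM, hm]; omega)) h
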